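/- Assume additionally 1/(2q1) + 1/(2q2) + 1/q3 < 1 < 1/(2q1) + 1/q2 + 1/q3 (Region II). Then Σ_{(t2,t3)∈ℤ²} |r(0,t2,t3)| = ∞ while Σ_{t3∈ℤ} |r(0,0,t3)| < ∞. -/

import Mathlib

open Filter

noncomputable def mI (n : ℤ) : ℝ := max |(n : ℝ)| 1

lemma one_le_mI (n : ℤ) : 1 ≤ mI n := le_max_right _ _
lemma mI_pos (n : ℤ) : 0 < mI n := lt_of_lt_of_le one_pos (one_le_mI n)

lemma summable_mI (β : ℝ) (hβ : 1 < β) : Summable (fun n : ℤ => mI n ^ (-β)) := by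
  have hβ0 : (0:ℝ) ≤ β := le_of_lt (lt_trans one_pos hβ)
  have hnat : Summable (fun n : ℕ => mI (n : ℤ) ^ (-β)) := by
    have hbase : Summable (fun n : ℕ => (((n:ℝ)+1) ^ β)⁻¹) := by
      have := (Real.summable_nat_rpow_inv (p := β)).2 hβ
      have h1 := (summable_nat_add_iff (f := fun n : ℕ => (((n:ℝ)) ^ β)⁻¹) 1).2 this
      simpa [Nat.cast_add] using h1
    have hbase2 : Summable (fun n : ℕ => (2:ℝ) ^ β * (((n:ℝ)+1) ^ β)⁻¹) :=
      hbase.mul_left _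
    apply Summable.of_nonneg_of_le (fun n => Real.rpow_nonneg (le_of_lt (mI_pos _)) _) _ hbase2
    intro n
    have hm : ((n:ℝ)+1)/2 ≤ mI (n:ℤ) := by
      rcases le_or_gt ((n:ℝ)) 1 with h | h
      · have : ((n:ℝ)+1)/2 ≤ 1 := by linarith
        exact le_trans this (one_le_mI _)
      · have : ((n:ℝ)+1)/2 ≤ (n:ℝ) := by linarith
        refine le_trans this ?_
        have : |((n:ℤ):ℝ)| = (n:ℝ) := by
          push_cast; exact abs_of_nonneg (Nat.cast_nonneg n)
        simp [mI, this]
    have hpos : (0:ℝ) < ((n:ℝ)+1)/2 := by positivity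
    have := Real.rpow_le_rpow (le_of_lt hpos) hm hβ0
    have hinv : (mI (n:ℤ) ^ β)⁻¹ ≤ ((((n:ℝ)+1)/2) ^ β)⁻¹ := by
      apply inv_anti₀ (Real.rpow_pos_of_pos hpos _) this
    calc mI (n:ℤ) ^ (-β) = (mI (n:ℤ) ^ β)⁻¹ := Real.rpow_neg (le_of_lt (mI_pos _)) _
    _ ≤ ((((n:ℝ)+1)/2) ^ β)⁻¹ := hinv
    _ = (2:ℝ) ^ β * (((n:ℝ)+1) ^ β)⁻¹ := by
        rw [Real.div_rpow (by positivity) (by norm_num)]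
        rw [inv_div, div_eq_mul_inv]
  apply Summable.of_nat_of_neg
  · exact hnat
  · have : ∀ n : ℕ, mI (-(n:ℤ)) = mI (n:ℤ) := by
      intro n; simp [mI]
    simpa [this] using hnat

lemma summable_triple (β1 β2 β3 : ℝ) (h1 : 1 < β1) (h2 : 1 < β2) (h3 : 1 < β3) :
    Summable (fun s : ℤ × ℤ × ℤ => mI s.1 ^ (-β1) * (mI s.2.1 ^ (-β2) * mI s.2.2 ^ (-β3))) := by
  have h23 : Summable (fun v : ℤ × ℤ => mI v.1 ^ (-β2) * mI v.2 ^ (-β3)) :=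
    Summable.mul_of_nonneg (f := fun n : ℤ => mI n ^ (-β2)) (g := fun n : ℤ => mI n ^ (-β3))
      (summable_mI β2 h2) (summable_mI β3 h3)
      (Pi.le_def.mpr fun n => Real.rpow_nonneg (le_of_lt (mI_pos _)) _)
      (Pi.le_def.mpr fun n => Real.rpow_nonneg (le_of_lt (mI_pos _)) _)
  exact Summable.mul_of_nonneg (f := fun n : ℤ => mI n ^ (-β1))
    (g := fun v : ℤ × ℤ => mI v.1 ^ (-β2) * mI v.2 ^ (-β3))
    (summable_mI β1 h1) h23
    (Pi.le_def.mpr fun n => Real.rpow_nonneg (le_of_lt (mI_pos _)) _)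
    (Pi.le_def.mpr fun v => mul_nonneg (Real.rpow_nonneg (le_of_lt (mI_pos _)) _)
      (Real.rpow_nonneg (le_of_lt (mI_pos _)) _))

lemma D_lower (c1 c2 c3 x1 x2 x3 α1 α2 α3 θ1 θ2 θ3 ν : ℝ)
    (hc1 : 0 < c1) (hc2 : 0 < c2) (hc3 : 0 < c3)
    (hx1 : 1 ≤ x1) (hx2 : 1 ≤ x2) (hx3 : 1 ≤ x3)
    (hθ1 : 0 ≤ θ1) (hθ2 : 0 ≤ θ2) (hθ3 : 0 ≤ θ3) (hθs : θ1 + θ2 + θ3 = 1)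
    (hν : 0 < ν) :
    c1 ^ (θ1 * ν) * x1 ^ (α1 * (θ1 * ν)) *
      (c2 ^ (θ2 * ν) * x2 ^ (α2 * (θ2 * ν))) *
      (c3 ^ (θ3 * ν) * x3 ^ (α3 * (θ3 * ν)))
      ≤ (c1 * x1 ^ α1 + c2 * x2 ^ α2 + c3 * x3 ^ α3) ^ ν := by
  set y1 := c1 * x1 ^ α1 with hy1
  set y2 := c2 * x2 ^ α2 with hy2
  set y3 := c3 * x3 ^ α3 with hy3
  have hx1p : (0:ℝ) < x1 := lt_of_lt_of_le one_pos hx1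
  have hx2p : (0:ℝ) < x2 := lt_of_lt_of_le one_pos hx2
  have hx3p : (0:ℝ) < x3 := lt_of_lt_of_le one_pos hx3
  have hy1p : 0 < y1 := by positivity
  have hy2p : 0 < y2 := by positivity
  have hy3p : 0 < y3 := by positivity
  have hgm : y1 ^ θ1 * y2 ^ θ2 * y3 ^ θ3 ≤ y1 + y2 + y3 := by
    have h := Real.geom_mean_le_arith_mean3_weighted hθ1 hθ2 hθ3
      (le_of_lt hy1p) (le_of_lt hy2p) (le_of_lt hy3p) hθs
    refine le_trans h ?_
    have l1 : θ1 * y1 ≤ y1 := by nlinarith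
    have l2 : θ2 * y2 ≤ y2 := by nlinarith
    have l3 : θ3 * y3 ≤ y3 := by nlinarith
    linarith
  have hpow := Real.rpow_le_rpow (by positivity) hgm (le_of_lt hν)
  calc c1 ^ (θ1 * ν) * x1 ^ (α1 * (θ1 * ν)) *
      (c2 ^ (θ2 * ν) * x2 ^ (α2 * (θ2 * ν))) *
      (c3 ^ (θ3 * ν) * x3 ^ (α3 * (θ3 * ν)))
      = (y1 ^ θ1 * y2 ^ θ2 * y3 ^ θ3) ^ ν := by
        rw [Real.mul_rpow (by positivity) (by positivity),
          Real.mul_rpow (by positivity) (by positivity)]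
        rw [← Real.rpow_mul (le_of_lt hy1p), ← Real.rpow_mul (le_of_lt hy2p),
          ← Real.rpow_mul (le_of_lt hy3p)]
        rw [hy1, hy2, hy3]
        rw [Real.mul_rpow (le_of_lt hc1) (by positivity),
          Real.mul_rpow (le_of_lt hc2) (by positivity),
          Real.mul_rpow (le_of_lt hc3) (by positivity)]
        rw [← Real.rpow_mul (le_of_lt hx1p), ← Real.rpow_mul (le_of_lt hx2p),
          ← Real.rpow_mul (le_of_lt hx3p)]
    _ ≤ (y1 + y2 + y3) ^ ν := hpow

set_option maxHeartbeats 1000000 in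
theorem stmt_10 (q1 q2 q3 c1 c2 c3 ν : ℝ)
    (hq1 : 0 < q1) (hq2 : 0 < q2) (hq3 : 0 < q3)
    (hc1 : 0 < c1) (hc2 : 0 < c2) (hc3 : 0 < c3) (hν : 0 < ν)
    (g : ℤ × ℤ × ℤ → ℝ) (hg : ∃ M : ℝ, ∀ t, |g t| ≤ M)
    (hg1 : Tendsto g cofinite (nhds 1))
    (a : ℤ × ℤ × ℤ → ℝ)
    (ha : ∀ t : ℤ × ℤ × ℤ, a t = g t /
      (c1 * (max |(t.1 : ℝ)| 1) ^ (q1 / ν) + c2 * (max |(t.2.1 : ℝ)| 1) ^ (q2 / ν) +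
        c3 * (max |(t.2.2 : ℝ)| 1) ^ (q3 / ν)) ^ ν)
    (hQlow : 1 < 1 / q1 + 1 / q2 + 1 / q3)
    (hQup : 1 / q1 + 1 / q2 + 1 / q3 < 2)
    (r : ℤ × ℤ × ℤ → ℝ)
    (hr : ∀ t : ℤ × ℤ × ℤ, r t = ∑' s : ℤ × ℤ × ℤ, a s * a (t + s))
    (hRegionLow : 1 / (2 * q1) + 1 / (2 * q2) + 1 / q3 < 1)
    (hRegionUp : 1 < 1 / (2 * q1) + 1 / q2 + 1 / q3) :
    ¬ Summable (fun p : ℤ × ℤ => |r (0, p.1, p.2)|) ∧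
      Summable (fun t3 : ℤ => |r (0, 0, t3)|) := by
  obtain ⟨M0, hM0⟩ := hg
  set M : ℝ := max M0 1 with hMdef
  have hM1 : (1:ℝ) ≤ M := le_max_right _ _
  have hM : ∀ t, |g t| ≤ M := fun t => le_trans (hM0 t) (le_max_left _ _)
  have hMpos : (0:ℝ) < M := lt_of_lt_of_le one_pos hM1
  set Da : ℤ × ℤ × ℤ → ℝ := fun s =>
    c1 * mI s.1 ^ (q1 / ν) + c2 * mI s.2.1 ^ (q2 / ν) + c3 * mI s.2.2 ^ (q3 / ν) with hDadef
  have hDa_pos : ∀ s, 0 < Da s := fun s =>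
    add_pos (add_pos (mul_pos hc1 (Real.rpow_pos_of_pos (mI_pos _) _))
      (mul_pos hc2 (Real.rpow_pos_of_pos (mI_pos _) _)))
      (mul_pos hc3 (Real.rpow_pos_of_pos (mI_pos _) _))
  have ha' : ∀ s, a s = g s / (Da s) ^ ν := by
    intro s; rw [ha s]; rfl
  -- the key pointwise bound
  have key : ∀ t1 t2 t3 : ℝ, 0 ≤ t1 → 0 ≤ t2 → 0 ≤ t3 → t1 + t2 + t3 = 1 →
      ∃ C : ℝ, 0 < C ∧ ∀ s : ℤ × ℤ × ℤ,
        |a s| ≤ C * (mI s.1 ^ (-(q1 * t1)) *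
          (mI s.2.1 ^ (-(q2 * t2)) * mI s.2.2 ^ (-(q3 * t3)))) := by
    intro t1 t2 t3 h1 h2 h3 hsum
    refine ⟨M * (c1 ^ (t1 * ν) * c2 ^ (t2 * ν) * c3 ^ (t3 * ν))⁻¹, by positivity, fun s => ?_⟩
    have hD := D_lower c1 c2 c3 (mI s.1) (mI s.2.1) (mI s.2.2) (q1/ν) (q2/ν) (q3/ν)
      t1 t2 t3 ν hc1 hc2 hc3 (one_le_mI _) (one_le_mI _) (one_le_mI _) h1 h2 h3 hsum hν
    rw [show (q1/ν) * (t1*ν) = q1*t1 by field_simp,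
        show (q2/ν) * (t2*ν) = q2*t2 by field_simp,
        show (q3/ν) * (t3*ν) = q3*t3 by field_simp] at hD
    have habs : |a s| ≤ M / (Da s) ^ ν := by
      rw [ha' s, abs_div, abs_of_pos (Real.rpow_pos_of_pos (hDa_pos s) ν)]
      gcongr
      · exact le_of_lt (Real.rpow_pos_of_pos (hDa_pos s) ν)
      · exact hM s
    refine le_trans habs ?_
    have hm1 := mI_pos s.1; have hm2 := mI_pos s.2.1; have hm3 := mI_pos s.2.2
    have hprodpos : 0 < c1 ^ (t1*ν) * mI s.1 ^ (q1*t1) * (c2 ^ (t2*ν) * mI s.2.1 ^ (q2*t2)) *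
        (c3 ^ (t3*ν) * mI s.2.2 ^ (q3*t3)) := by
      have p1 := Real.rpow_pos_of_pos hm1 (q1*t1)
      have p2 := Real.rpow_pos_of_pos hm2 (q2*t2)
      have p3 := Real.rpow_pos_of_pos hm3 (q3*t3)
      have pc1 := Real.rpow_pos_of_pos hc1 (t1*ν)
      have pc2 := Real.rpow_pos_of_pos hc2 (t2*ν)
      have pc3 := Real.rpow_pos_of_pos hc3 (t3*ν)
      positivity
    have hstep : M / (Da s) ^ ν ≤ M / (c1 ^ (t1*ν) * mI s.1 ^ (q1*t1) *
        (c2 ^ (t2*ν) * mI s.2.1 ^ (q2*t2)) * (c3 ^ (t3*ν) * mI s.2.2 ^ (q3*t3))) :=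
      div_le_div_of_nonneg_left (le_of_lt hMpos) hprodpos hD
    refine le_trans hstep (le_of_eq ?_)
    rw [Real.rpow_neg (le_of_lt hm1), Real.rpow_neg (le_of_lt hm2), Real.rpow_neg (le_of_lt hm3)]
    rw [div_eq_mul_inv]
    rw [show c1 ^ (t1*ν) * mI s.1 ^ (q1*t1) * (c2 ^ (t2*ν) * mI s.2.1 ^ (q2*t2)) *
        (c3 ^ (t3*ν) * mI s.2.2 ^ (q3*t3)) =
        (c1 ^ (t1*ν) * c2 ^ (t2*ν) * c3 ^ (t3*ν)) *
        (mI s.1 ^ (q1*t1) * (mI s.2.1 ^ (q2*t2) * mI s.2.2 ^ (q3*t3))) from by ring]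
    rw [mul_inv, mul_inv, mul_inv]
    ring
  -- helper for doubling exponents
  have h2e : ∀ (n : ℤ) (e : ℝ), mI n ^ (-(2*e)) = mI n ^ (-e) * mI n ^ (-e) := by
    intro n e
    rw [← Real.rpow_add (mI_pos n)]
    ring_nf
  constructor
  · -- Part 1 : non-summability in the (t2,t3) plane
    intro H
    -- good region: g > 1/2 outside a finite set
    have hev : ∀ᶠ s in cofinite, (1:ℝ)/2 < g s :=
      hg1.eventually (eventually_gt_nhds (by norm_num))
    have hfin : {s : ℤ × ℤ × ℤ | ¬ (1:ℝ)/2 < g s}.Finite := Filter.eventually_cofinite.1 hev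
    obtain ⟨W0, hW0⟩ := (hfin.image Prod.fst).bddAbove
    set W : ℤ := W0 + 1 with hWdef
    have hgood : ∀ s : ℤ × ℤ × ℤ, W ≤ s.1 → (1:ℝ)/2 < g s := by
      intro s hs
      by_contra hcon
      have hmem : s.1 ∈ Prod.fst '' {s : ℤ × ℤ × ℤ | ¬ (1:ℝ)/2 < g s} := ⟨s, hcon, rfl⟩
      have := hW0 hmem
      omega
    -- square-summable majorant P for |a|
    have hδ : 0 < (1 - (1/(2*q1) + 1/(2*q2) + 1/(2*q3)))/3 := by
      have e1 : 1/(2*q1) = 1/q1/2 := by rw [div_div, mul_comm]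
      have e2 : 1/(2*q2) = 1/q2/2 := by rw [div_div, mul_comm]
      have e3 : 1/(2*q3) = 1/q3/2 := by rw [div_div, mul_comm]
      rw [e1, e2, e3]; linarith
    set δ : ℝ := (1 - (1/(2*q1) + 1/(2*q2) + 1/(2*q3)))/3 with hδdef
    set w1 : ℝ := 1/(2*q1) + δ with hw1def
    set w2 : ℝ := 1/(2*q2) + δ with hw2def
    set w3 : ℝ := 1/(2*q3) + δ with hw3def
    have hw1pos : 0 < w1 := by positivity
    have hw2pos : 0 < w2 := by positivity
    have hw3pos : 0 < w3 := by positivity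
    have hwsum : w1 + w2 + w3 = 1 := by rw [hw1def, hw2def, hw3def, hδdef]; ring
    have hf1 : q1 * w1 = 1/2 + q1 * δ := by rw [hw1def]; field_simp
    have hf2 : q2 * w2 = 1/2 + q2 * δ := by rw [hw2def]; field_simp
    have hf3 : q3 * w3 = 1/2 + q3 * δ := by rw [hw3def]; field_simp
    have hg1' : 1 < 2*(q1*w1) := by
      rw [hf1]; linarith only [mul_pos hq1 hδ]
    have hg2' : 1 < 2*(q2*w2) := by
      rw [hf2]; linarith only [mul_pos hq2 hδ]
    have hg3' : 1 < 2*(q3*w3) := by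
      rw [hf3]; linarith only [mul_pos hq3 hδ]
    obtain ⟨C, hCpos, hCb⟩ := key w1 w2 w3 hw1pos.le hw2pos.le hw3pos.le hwsum
    set P : ℤ × ℤ × ℤ → ℝ := fun s => C * (mI s.1 ^ (-(q1*w1)) *
      (mI s.2.1 ^ (-(q2*w2)) * mI s.2.2 ^ (-(q3*w3)))) with hPdef
    have hP0 : ∀ s, 0 ≤ P s := by
      intro s
      rw [hPdef]
      have p1 := Real.rpow_nonneg (le_of_lt (mI_pos s.1)) (-(q1*w1))
      have p2 := Real.rpow_nonneg (le_of_lt (mI_pos s.2.1)) (-(q2*w2))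
      have p3 := Real.rpow_nonneg (le_of_lt (mI_pos s.2.2)) (-(q3*w3))
      positivity
    have hPa : ∀ s, |a s| ≤ P s := by
      intro s; rw [hPdef]; exact hCb s
    have hPP : Summable (fun s => P s * P s) := by
      have hs := (summable_triple (2*(q1*w1)) (2*(q2*w2)) (2*(q3*w3)) hg1' hg2' hg3').mul_left (C*C)
      refine hs.congr fun s => ?_
      rw [hPdef]
      simp only
      rw [h2e s.1 (q1*w1), h2e s.2.1 (q2*w2), h2e s.2.2 (q3*w3)]
      ring
    have hPtrans : ∀ v : ℤ × ℤ × ℤ, Summable (fun u : ℤ × ℤ × ℤ => P (u+v) * P (u+v)) := by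
      intro v
      have := ((Equiv.addRight v).summable_iff (f := fun s => P s * P s)).2 hPP
      exact this.congr fun u => rfl
    have hprod : ∀ v v' : ℤ × ℤ × ℤ, Summable (fun u : ℤ × ℤ × ℤ => a (u+v) * a (u+v')) := by
      intro v v'
      apply Summable.of_abs
      apply Summable.of_nonneg_of_le (fun u => abs_nonneg _) _
        (((hPtrans v).add (hPtrans v')).div_const 2)
      intro u
      have e1 := hPa (u+v)
      have e2 := hPa (u+v')
      have h0 := hP0 (u+v)
      have h0' := hP0 (u+v')
      calc |a (u+v) * a (u+v')| = |a (u+v)| * |a (u+v')| := abs_mul _ _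
      _ ≤ P (u+v) * P (u+v') := mul_le_mul e1 e2 (abs_nonneg _) h0
      _ ≤ (P (u+v) * P (u+v) + P (u+v') * P (u+v'))/2 := by
            linarith only [two_mul_le_add_sq (P (u+v)) (P (u+v'))]
    have hcross : ∀ v v' : ℤ × ℤ × ℤ,
        (∑' u : ℤ × ℤ × ℤ, a (u+v) * a (u+v')) = r (v' - v) := by
      intro v v'
      rw [hr]
      have hre := Equiv.tsum_eq (Equiv.addRight v) (fun s => a s * a ((v' - v) + s))
      rw [← hre]
      apply tsum_congr
      intro u
      have h1 : (Equiv.addRight v) u = u + v := rfl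
      rw [h1, show (v' - v) + (u + v) = u + v' from by abel]
    -- constants
    set WR : ℝ := |(W:ℝ)| with hWRdef
    have hWR0 : 0 ≤ WR := abs_nonneg _
    set KD : ℝ := c1 * (WR + 2) ^ (q1/ν) + c2 * (4:ℝ)^(q2/ν) + c3 * (4:ℝ)^(q3/ν) with hKDdef
    have hKDpos : 0 < KD := by
      have p1 : (0:ℝ) < (WR + 2) ^ (q1/ν) := Real.rpow_pos_of_pos (by linarith) _
      have p2 : (0:ℝ) < (4:ℝ) ^ (q2/ν) := Real.rpow_pos_of_pos (by norm_num) _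
      have p3 : (0:ℝ) < (4:ℝ) ^ (q3/ν) := Real.rpow_pos_of_pos (by norm_num) _
      rw [hKDdef]; positivity
    set c0 : ℝ := (1/2) * KD ^ (-ν) with hc0def
    have hc0pos : 0 < c0 := by
      rw [hc0def]
      have := Real.rpow_pos_of_pos hKDpos (-ν)
      positivity
    set S : ℝ := ∑' p : ℤ × ℤ, |r (0, p.1, p.2)| with hSdef
    set Eexp : ℝ := ν/q1 + 2*(ν/q2) + 2*(ν/q3) - 2*ν with hEexpdef
    -- the main estimate, for every L
    have main : ∀ L : ℕ, 1 ≤ L → c0^2 * (L:ℝ) ^ Eexp ≤ S := by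
      intro L hL
      have hLr : (1:ℝ) ≤ (L:ℝ) := by exact_mod_cast hL
      have hLrpos : (0:ℝ) < (L:ℝ) := lt_of_lt_of_le one_pos hLr
      set N1 : ℕ := ⌈(L:ℝ) ^ (ν/q1)⌉₊ with hN1def
      set N2 : ℕ := ⌈(L:ℝ) ^ (ν/q2)⌉₊ with hN2def
      set N3 : ℕ := ⌈(L:ℝ) ^ (ν/q3)⌉₊ with hN3def
      have hN1low : (L:ℝ)^(ν/q1) ≤ (N1:ℝ) := Nat.le_ceil _
      have hN2low : (L:ℝ)^(ν/q2) ≤ (N2:ℝ) := Nat.le_ceil _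
      have hN3low : (L:ℝ)^(ν/q3) ≤ (N3:ℝ) := Nat.le_ceil _
      have hN1up : (N1:ℝ) ≤ (L:ℝ)^(ν/q1) + 1 :=
        le_of_lt (Nat.ceil_lt_add_one (Real.rpow_nonneg hLrpos.le _))
      have hN2up : (N2:ℝ) ≤ (L:ℝ)^(ν/q2) + 1 :=
        le_of_lt (Nat.ceil_lt_add_one (Real.rpow_nonneg hLrpos.le _))
      have hN3up : (N3:ℝ) ≤ (L:ℝ)^(ν/q3) + 1 :=
        le_of_lt (Nat.ceil_lt_add_one (Real.rpow_nonneg hLrpos.le _))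
      have hone1 : (1:ℝ) ≤ (L:ℝ)^(ν/q1) := Real.one_le_rpow hLr (by positivity)
      have hone2 : (1:ℝ) ≤ (L:ℝ)^(ν/q2) := Real.one_le_rpow hLr (by positivity)
      have hone3 : (1:ℝ) ≤ (L:ℝ)^(ν/q3) := Real.one_le_rpow hLr (by positivity)
      have hN1ge1 : (1:ℝ) ≤ (N1:ℝ) := le_trans hone1 hN1low
      have hN2ge1 : (1:ℝ) ≤ (N2:ℝ) := le_trans hone2 hN2low
      have hN3ge1 : (1:ℝ) ≤ (N3:ℝ) := le_trans hone3 hN3low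
      have hN1pos : (0:ℝ) < (N1:ℝ) := lt_of_lt_of_le one_pos hN1ge1
      have hN2pos : (0:ℝ) < (N2:ℝ) := lt_of_lt_of_le one_pos hN2ge1
      have hN3pos : (0:ℝ) < (N3:ℝ) := lt_of_lt_of_le one_pos hN3ge1
      set T : Finset (ℤ × ℤ) := Finset.Ico 0 (N2:ℤ) ×ˢ Finset.Ico 0 (N3:ℤ) with hTdef
      set U : Finset (ℤ × ℤ × ℤ) :=
        Finset.Ico W (W + (N1:ℤ)) ×ˢ (Finset.Ico 0 (N2:ℤ) ×ˢ Finset.Ico 0 (N3:ℤ)) with hUdef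
      have hTcard : T.card = N2 * N3 := by
        rw [hTdef, Finset.card_product, Int.card_Ico, Int.card_Ico]
        simp
      have hUcard : U.card = N1 * (N2 * N3) := by
        rw [hUdef, Finset.card_product, Finset.card_product, Int.card_Ico, Int.card_Ico,
          Int.card_Ico]
        rw [show W + (N1:ℤ) - W = (N1:ℤ) from by ring]
        simp
      -- rpow helper
      have hLpow : ∀ qq : ℝ, 0 < qq → ((L:ℝ)^(ν/qq))^(qq/ν) = (L:ℝ) := by
        intro qq hqq
        rw [← Real.rpow_mul hLrpos.le]
        rw [show (ν/qq) * (qq/ν) = 1 from by field_simp]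
        exact Real.rpow_one _
      have hterm : ∀ (cc qq x Kc : ℝ), 0 < cc → 0 < qq → 0 < x → 0 ≤ Kc →
          x ≤ Kc * (L:ℝ)^(ν/qq) → cc * x^(qq/ν) ≤ cc * (Kc^(qq/ν) * (L:ℝ)) := by
        intro cc qq x Kc hcc hqq hx hKc hle
        have h1 : x^(qq/ν) ≤ (Kc * (L:ℝ)^(ν/qq))^(qq/ν) :=
          Real.rpow_le_rpow hx.le hle (by positivity)
        rw [Real.mul_rpow hKc (Real.rpow_nonneg hLrpos.le _)] at h1
        rw [hLpow qq hqq] at h1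
        exact mul_le_mul_of_nonneg_left h1 hcc.le
      -- the pointwise lower bound on the box
      have hpoint : ∀ u ∈ U, ∀ t ∈ T, c0 * (L:ℝ)^(-ν) ≤ a (u + ((0:ℤ), t.1, t.2)) := by
        intro u hu t ht
        rw [hUdef, Finset.mem_product, Finset.mem_product] at hu
        obtain ⟨hu1, hu2, hu3⟩ := hu
        rw [hTdef, Finset.mem_product] at ht
        obtain ⟨ht1, ht2⟩ := ht
        rw [Finset.mem_Ico] at hu1 hu2 hu3 ht1 ht2
        have hco : u + ((0:ℤ), t.1, t.2) = (u.1, u.2.1 + t.1, u.2.2 + t.2) := by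
          cases u with
          | mk a1 a23 =>
            cases a23 with
            | mk a2 a3 => simp [Prod.ext_iff]
        rw [hco]
        have hg2 : (1:ℝ)/2 < g (u.1, u.2.1 + t.1, u.2.2 + t.2) := hgood _ hu1.1
        -- coordinate bounds
        have hmi1 : mI u.1 ≤ (WR + 2) * (L:ℝ)^(ν/q1) := by
          have hWle : (W:ℝ) ≤ (u.1:ℝ) := by exact_mod_cast hu1.1
          have hult : (u.1:ℝ) < (W:ℝ) + (N1:ℝ) := by exact_mod_cast hu1.2
          have hnegW : -WR ≤ (W:ℝ) := neg_abs_le _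
          have hWup : (W:ℝ) ≤ WR := le_abs_self _
          have habs1 : |(u.1:ℝ)| ≤ WR + (N1:ℝ) := by
            rw [abs_le]; constructor
            · linarith only [hWle, hnegW, hN1pos]
            · linarith only [hult, hWup]
          have hstep : mI u.1 ≤ WR + (N1:ℝ) := max_le habs1 (by linarith only [hWR0, hN1ge1])
          refine le_trans hstep ?_
          have haux : WR ≤ WR * (L:ℝ)^(ν/q1) := le_mul_of_one_le_right hWR0 hone1
          linarith only [hN1up, hone1, haux]
        have hmi2 : mI (u.2.1 + t.1) ≤ 4 * (L:ℝ)^(ν/q2) := by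
          have h0 : (0:ℝ) ≤ ((u.2.1 + t.1 : ℤ):ℝ) := by
            have c1' : (0:ℝ) ≤ (u.2.1:ℝ) := by exact_mod_cast hu2.1
            have c2' : (0:ℝ) ≤ (t.1:ℝ) := by exact_mod_cast ht1.1
            push_cast
            linarith only [c1', c2']
          have hub : ((u.2.1 + t.1 : ℤ):ℝ) ≤ 2*(N2:ℝ) := by
            have c1' : (u.2.1:ℝ) < (N2:ℝ) := by exact_mod_cast hu2.2
            have c2' : (t.1:ℝ) < (N2:ℝ) := by exact_mod_cast ht1.2
            push_cast
            linarith only [c1', c2']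
          have hstep : mI (u.2.1 + t.1) ≤ 2*(N2:ℝ) := by
            apply max_le _ (by linarith only [hN2ge1])
            rw [abs_of_nonneg h0]; exact hub
          refine le_trans hstep ?_
          linarith only [hN2up, hone2]
        have hmi3 : mI (u.2.2 + t.2) ≤ 4 * (L:ℝ)^(ν/q3) := by
          have h0 : (0:ℝ) ≤ ((u.2.2 + t.2 : ℤ):ℝ) := by
            have c1' : (0:ℝ) ≤ (u.2.2:ℝ) := by exact_mod_cast hu3.1
            have c2' : (0:ℝ) ≤ (t.2:ℝ) := by exact_mod_cast ht2.1
            push_cast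
            linarith only [c1', c2']
          have hub : ((u.2.2 + t.2 : ℤ):ℝ) ≤ 2*(N3:ℝ) := by
            have c1' : (u.2.2:ℝ) < (N3:ℝ) := by exact_mod_cast hu3.2
            have c2' : (t.2:ℝ) < (N3:ℝ) := by exact_mod_cast ht2.2
            push_cast
            linarith only [c1', c2']
          have hstep : mI (u.2.2 + t.2) ≤ 2*(N3:ℝ) := by
            apply max_le _ (by linarith only [hN3ge1])
            rw [abs_of_nonneg h0]; exact hub
          refine le_trans hstep ?_
          linarith only [hN3up, hone3]
        -- denominator bound
        have hDab : Da (u.1, u.2.1 + t.1, u.2.2 + t.2) ≤ KD * (L:ℝ) := by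
          rw [hDadef]
          simp only
          have t1b := hterm c1 q1 (mI u.1) (WR + 2) hc1 hq1 (mI_pos _) (by linarith) hmi1
          have t2b := hterm c2 q2 (mI (u.2.1 + t.1)) 4 hc2 hq2 (mI_pos _) (by norm_num) hmi2
          have t3b := hterm c3 q3 (mI (u.2.2 + t.2)) 4 hc3 hq3 (mI_pos _) (by norm_num) hmi3
          calc c1 * mI u.1 ^ (q1/ν) + c2 * mI (u.2.1 + t.1) ^ (q2/ν)
                + c3 * mI (u.2.2 + t.2) ^ (q3/ν)
              ≤ c1 * ((WR+2)^(q1/ν) * (L:ℝ)) + c2 * ((4:ℝ)^(q2/ν) * (L:ℝ))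
                + c3 * ((4:ℝ)^(q3/ν) * (L:ℝ)) := add_le_add (add_le_add t1b t2b) t3b
          _ = KD * (L:ℝ) := by rw [hKDdef]; ring
        -- conclude
        rw [ha']
        have hDp := hDa_pos (u.1, u.2.1 + t.1, u.2.2 + t.2)
        have hpow : Da (u.1, u.2.1 + t.1, u.2.2 + t.2) ^ ν ≤ (KD * (L:ℝ)) ^ ν :=
          Real.rpow_le_rpow hDp.le hDab hν.le
        calc c0 * (L:ℝ)^(-ν) = (1/2) / (KD * (L:ℝ)) ^ ν := by
              rw [hc0def, Real.mul_rpow hKDpos.le hLrpos.le,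
                Real.rpow_neg hKDpos.le, Real.rpow_neg hLrpos.le]
              ring
        _ ≤ (1/2) / Da (u.1, u.2.1 + t.1, u.2.2 + t.2) ^ ν :=
              div_le_div_of_nonneg_left (by norm_num) (Real.rpow_pos_of_pos hDp ν) hpow
        _ ≤ g (u.1, u.2.1 + t.1, u.2.2 + t.2) / Da (u.1, u.2.1 + t.1, u.2.2 + t.2) ^ ν := by
              apply (div_le_div_iff_of_pos_right (Real.rpow_pos_of_pos hDp ν)).2
              linarith only [hg2]
      -- inner sums
      set inner : ℤ × ℤ × ℤ → ℝ := fun u => ∑ t ∈ T, a (u + ((0:ℤ), t.1, t.2)) with hinnerdef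
      set Xb : ℝ := ((N2:ℝ)*(N3:ℝ)) * (c0 * (L:ℝ)^(-ν)) with hXbdef
      have hLnegpow : (0:ℝ) < (L:ℝ)^(-ν) := Real.rpow_pos_of_pos hLrpos _
      have hXbpos : 0 < Xb := by rw [hXbdef]; positivity
      have hinnerlow : ∀ u ∈ U, Xb ≤ inner u := by
        intro u hu
        have hstep := Finset.card_nsmul_le_sum T
          (fun t => a (u + ((0:ℤ), t.1, t.2))) (c0 * (L:ℝ)^(-ν))
          (fun t ht => hpoint u hu t ht)
        rw [hTcard, nsmul_eq_mul] at hstep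
        rw [hXbdef, hinnerdef]
        calc ((N2:ℝ)*(N3:ℝ)) * (c0 * (L:ℝ)^(-ν))
            = ((N2 * N3 : ℕ):ℝ) * (c0 * (L:ℝ)^(-ν)) := by push_cast; ring
        _ ≤ _ := hstep
      have hsqsum : Summable (fun u => inner u * inner u) := by
        have hexpand : (fun u : ℤ × ℤ × ℤ => inner u * inner u) =
            fun u => ∑ t ∈ T, ∑ t' ∈ T,
              a (u + ((0:ℤ), t.1, t.2)) * a (u + ((0:ℤ), t'.1, t'.2)) := by
          funext u
          rw [hinnerdef]
          simp only
          rw [Finset.sum_mul_sum]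
        rw [hexpand]
        apply summable_sum
        intro t _
        apply summable_sum
        intro t' _
        exact hprod _ _
      have htsum : (∑' u, inner u * inner u) =
          ∑ t ∈ T, ∑ t' ∈ T, r (((0:ℤ), t'.1, t'.2) - ((0:ℤ), t.1, t.2)) := by
        have hexpand : ∀ u : ℤ × ℤ × ℤ, inner u * inner u =
            ∑ t ∈ T, ∑ t' ∈ T,
              a (u + ((0:ℤ), t.1, t.2)) * a (u + ((0:ℤ), t'.1, t'.2)) := by
          intro u
          rw [hinnerdef]
          simp only
          rw [Finset.sum_mul_sum]
        rw [tsum_congr hexpand]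
        rw [Summable.tsum_finsetSum (fun t _ => summable_sum (fun t' _ => hprod _ _))]
        refine Finset.sum_congr rfl (fun t _ => ?_)
        rw [Summable.tsum_finsetSum (fun t' _ => hprod _ _)]
        refine Finset.sum_congr rfl (fun t' _ => ?_)
        exact hcross _ _
      have hup : ∑ t ∈ T, ∑ t' ∈ T, r (((0:ℤ), t'.1, t'.2) - ((0:ℤ), t.1, t.2))
          ≤ ((N2:ℝ)*(N3:ℝ)) * S := by
        have hone : ∀ t ∈ T, ∑ t' ∈ T, r (((0:ℤ), t'.1, t'.2) - ((0:ℤ), t.1, t.2)) ≤ S := by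
          intro t _
          have step1 : ∑ t' ∈ T, r (((0:ℤ), t'.1, t'.2) - ((0:ℤ), t.1, t.2))
              ≤ ∑ t' ∈ T, |r ((0:ℤ), t'.1 - t.1, t'.2 - t.2)| := by
            apply Finset.sum_le_sum
            intro t' _
            rw [show ((0:ℤ), t'.1, t'.2) - ((0:ℤ), t.1, t.2)
              = ((0:ℤ), t'.1 - t.1, t'.2 - t.2) from by simp [Prod.ext_iff]]
            exact le_abs_self _
          refine le_trans step1 ?_
          have hinj : ∀ x ∈ T, ∀ y ∈ T,
              (fun t' : ℤ × ℤ => (t'.1 - t.1, t'.2 - t.2)) x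
                = (fun t' : ℤ × ℤ => (t'.1 - t.1, t'.2 - t.2)) y → x = y := by
            intro x _ y _ h
            simp only [Prod.mk.injEq] at h
            exact Prod.ext_iff.2 ⟨by omega, by omega⟩
          have himg := Finset.sum_image
            (f := fun v : ℤ × ℤ => |r ((0:ℤ), v.1, v.2)|)
            (g := fun t' : ℤ × ℤ => (t'.1 - t.1, t'.2 - t.2)) (s := T) hinj
          rw [← himg, hSdef]
          exact Summable.sum_le_tsum _ (fun _ _ => abs_nonneg _) H
        calc ∑ t ∈ T, ∑ t' ∈ T, r (((0:ℤ), t'.1, t'.2) - ((0:ℤ), t.1, t.2))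
            ≤ ∑ _t ∈ T, S := Finset.sum_le_sum hone
        _ = ((N2:ℝ)*(N3:ℝ)) * S := by
            rw [Finset.sum_const, hTcard, nsmul_eq_mul]
            push_cast; ring
      have hUlow : ((N1:ℝ) * ((N2:ℝ)*(N3:ℝ))) * Xb^2 ≤ ∑' u, inner u * inner u := by
        have hsqlow : ∀ u ∈ U, Xb^2 ≤ inner u * inner u := by
          intro u hu
          have h1 := hinnerlow u hu
          rw [pow_two]
          exact mul_le_mul h1 h1 hXbpos.le (hXbpos.le.trans h1)
        have h2 := Finset.card_nsmul_le_sum U (fun u => inner u * inner u) (Xb^2) hsqlow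
        have h3 := Summable.sum_le_tsum U (fun u _ => mul_self_nonneg (inner u)) hsqsum
        rw [hUcard, nsmul_eq_mul] at h2
        calc ((N1:ℝ) * ((N2:ℝ)*(N3:ℝ))) * Xb^2
            = ((N1 * (N2 * N3) : ℕ):ℝ) * Xb^2 := by push_cast; ring
        _ ≤ ∑ u ∈ U, inner u * inner u := h2
        _ ≤ ∑' u, inner u * inner u := h3
      have hcomb : ((N1:ℝ) * ((N2:ℝ)*(N3:ℝ))) * Xb^2 ≤ ((N2:ℝ)*(N3:ℝ)) * S := by
        calc ((N1:ℝ) * ((N2:ℝ)*(N3:ℝ))) * Xb^2 ≤ ∑' u, inner u * inner u := hUlow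
        _ = ∑ t ∈ T, ∑ t' ∈ T, r (((0:ℤ), t'.1, t'.2) - ((0:ℤ), t.1, t.2)) := htsum
        _ ≤ ((N2:ℝ)*(N3:ℝ)) * S := hup
      have hA : (0:ℝ) < (N2:ℝ)*(N3:ℝ) := mul_pos hN2pos hN3pos
      have hdiv : (N1:ℝ) * Xb^2 ≤ S := by
        have h' : ((N2:ℝ)*(N3:ℝ)) * ((N1:ℝ) * Xb^2) ≤ ((N2:ℝ)*(N3:ℝ)) * S := by
          calc ((N2:ℝ)*(N3:ℝ)) * ((N1:ℝ) * Xb^2)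
              = ((N1:ℝ) * ((N2:ℝ)*(N3:ℝ))) * Xb^2 := by ring
          _ ≤ ((N2:ℝ)*(N3:ℝ)) * S := hcomb
        exact le_of_mul_le_mul_left h' hA
      -- exponent algebra
      have hAlow : (L:ℝ)^(ν/q2 + ν/q3) ≤ (N2:ℝ)*(N3:ℝ) := by
        rw [Real.rpow_add hLrpos]
        exact mul_le_mul hN2low hN3low (Real.rpow_nonneg hLrpos.le _) hN2pos.le
      have hrpalg : (L:ℝ)^(ν/q1) * ((L:ℝ)^(ν/q2 + ν/q3))^2 * ((L:ℝ)^(-ν))^2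
          = (L:ℝ)^Eexp := by
        rw [pow_two, pow_two]
        rw [← Real.rpow_add hLrpos, ← Real.rpow_add hLrpos,
          ← Real.rpow_add hLrpos, ← Real.rpow_add hLrpos]
        rw [hEexpdef]
        congr 1
        ring
      have final : c0^2 * (L:ℝ)^Eexp ≤ (N1:ℝ) * Xb^2 := by
        have e1 : c0^2 * (L:ℝ)^Eexp
            = (L:ℝ)^(ν/q1) * ((L:ℝ)^(ν/q2 + ν/q3))^2 * (c0 * (L:ℝ)^(-ν))^2 := by
          rw [mul_pow (c0) ((L:ℝ)^(-ν)) 2, ← hrpalg]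
          ring
        rw [e1]
        have h2b : ((L:ℝ)^(ν/q2 + ν/q3))^2 ≤ ((N2:ℝ)*(N3:ℝ))^2 :=
          pow_le_pow_left₀ (Real.rpow_nonneg hLrpos.le _) hAlow 2
        have h3b : (0:ℝ) ≤ (c0 * (L:ℝ)^(-ν))^2 := sq_nonneg _
        calc (L:ℝ)^(ν/q1) * ((L:ℝ)^(ν/q2 + ν/q3))^2 * (c0 * (L:ℝ)^(-ν))^2
            ≤ (N1:ℝ) * ((N2:ℝ)*(N3:ℝ))^2 * (c0 * (L:ℝ)^(-ν))^2 := by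
              apply mul_le_mul_of_nonneg_right _ h3b
              exact mul_le_mul hN1low h2b (sq_nonneg _) hN1pos.le
        _ = (N1:ℝ) * Xb^2 := by rw [hXbdef]; ring
      exact le_trans final hdiv
    -- conclusion : contradiction with L → ∞
    have hEpos : 0 < Eexp := by
      have hq1' : q1 ≠ 0 := ne_of_gt hq1
      have hq2' : q2 ≠ 0 := ne_of_gt hq2
      have hq3' : q3 ≠ 0 := ne_of_gt hq3
      have h1 : ν/q1 = 2*ν*(1/(2*q1)) := by field_simp
      have h2 : 2*(ν/q2) = 2*ν*(1/q2) := by field_simp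
      have h3 : 2*(ν/q3) = 2*ν*(1/q3) := by field_simp
      rw [hEexpdef, h1, h2, h3]
      have hpos2 : 0 < 2*ν*((1/(2*q1) + 1/q2 + 1/q3) - 1) :=
        mul_pos (by linarith only [hν]) (by linarith only [hRegionUp])
      linarith only [hpos2]
    have htend : Tendsto (fun L : ℕ => (L:ℝ) ^ Eexp) atTop atTop :=
      (tendsto_rpow_atTop hEpos).comp tendsto_natCast_atTop_atTop
    obtain ⟨L, hL1, hLgt⟩ : ∃ L : ℕ, 1 ≤ L ∧ S / c0^2 < (L:ℝ)^Eexp := by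
      have := ((eventually_ge_atTop 1).and (htend.eventually_gt_atTop (S / c0^2))).exists
      obtain ⟨L, h1, h2⟩ := this
      exact ⟨L, h1, h2⟩
    have hmain := main L hL1
    have hc2 : (0:ℝ) < c0^2 := by positivity
    rw [div_lt_iff₀ hc2] at hLgt
    linarith only [hmain, hLgt]
  · -- Part 2 : summability along the t3 axis
    have hδ : 0 < (1 - (1/(2*q1) + 1/(2*q2) + 1/q3))/3 := by linarith
    set δ : ℝ := (1 - (1/(2*q1) + 1/(2*q2) + 1/q3))/3 with hδdef
    set θ1 : ℝ := 1/(2*q1) + δ with hθ1def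
    set θ2 : ℝ := 1/(2*q2) + δ with hθ2def
    set θ3 : ℝ := 1/q3 + δ with hθ3def
    have hθ1pos : 0 < θ1 := by positivity
    have hθ2pos : 0 < θ2 := by positivity
    have hθ3pos : 0 < θ3 := by positivity
    have hθsum : θ1 + θ2 + θ3 = 1 := by
      rw [hθ1def, hθ2def, hθ3def, hδdef]; ring
    have he1 : q1 * θ1 = 1/2 + q1 * δ := by
      rw [hθ1def]; field_simp
    have he2 : q2 * θ2 = 1/2 + q2 * δ := by
      rw [hθ2def]; field_simp
    have he3 : q3 * θ3 = 1 + q3 * δ := by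
      rw [hθ3def]; field_simp
    have h2e1 : 1 < 2*(q1*θ1) := by rw [he1]; nlinarith
    have h2e2 : 1 < 2*(q2*θ2) := by rw [he2]; nlinarith
    have h3e : 1 < q3*θ3 := by rw [he3]; nlinarith
    obtain ⟨C, hCpos, hCb⟩ := key θ1 θ2 θ3 (le_of_lt hθ1pos) (le_of_lt hθ2pos)
      (le_of_lt hθ3pos) hθsum
    -- summable majorant on ℤ × (ℤ×ℤ×ℤ)
    have hH : Summable (fun v : ℤ × ℤ => mI v.2 ^ (-(q3*θ3)) * mI (v.1 + v.2) ^ (-(q3*θ3))) := by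
      have hmul : Summable (fun v : ℤ × ℤ => mI v.1 ^ (-(q3*θ3)) * mI v.2 ^ (-(q3*θ3))) :=
        Summable.mul_of_nonneg (f := fun n : ℤ => mI n ^ (-(q3*θ3)))
          (g := fun n : ℤ => mI n ^ (-(q3*θ3)))
          (summable_mI _ h3e) (summable_mI _ h3e)
          (Pi.le_def.mpr fun n => Real.rpow_nonneg (le_of_lt (mI_pos _)) _)
          (Pi.le_def.mpr fun n => Real.rpow_nonneg (le_of_lt (mI_pos _)) _)
      let e : (ℤ × ℤ) ≃ (ℤ × ℤ) :=
        ⟨fun v => (v.1 + v.2, v.2), fun w => (w.1 - w.2, w.2),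
          fun v => by simp, fun w => by simp⟩
      have := (e.summable_iff
        (f := fun v : ℤ × ℤ => mI v.1 ^ (-(q3*θ3)) * mI v.2 ^ (-(q3*θ3)))).2 hmul
      have heq : ((fun v : ℤ × ℤ => mI v.1 ^ (-(q3*θ3)) * mI v.2 ^ (-(q3*θ3))) ∘ ⇑e)
          = fun v : ℤ × ℤ => mI v.2 ^ (-(q3*θ3)) * mI (v.1 + v.2) ^ (-(q3*θ3)) := by
        funext v
        simp only [Function.comp, e, Equiv.coe_fn_mk]
        ring
      rwa [heq] at this
    have hG12 : Summable (fun v : ℤ × ℤ => mI v.1 ^ (-(2*(q1*θ1))) * mI v.2 ^ (-(2*(q2*θ2)))) :=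
      Summable.mul_of_nonneg (f := fun n : ℤ => mI n ^ (-(2*(q1*θ1))))
        (g := fun n : ℤ => mI n ^ (-(2*(q2*θ2))))
        (summable_mI _ h2e1) (summable_mI _ h2e2)
        (Pi.le_def.mpr fun n => Real.rpow_nonneg (le_of_lt (mI_pos _)) _)
        (Pi.le_def.mpr fun n => Real.rpow_nonneg (le_of_lt (mI_pos _)) _)
    have hbig : Summable (fun w : (ℤ × ℤ) × (ℤ × ℤ) =>
        (mI w.1.1 ^ (-(2*(q1*θ1))) * mI w.1.2 ^ (-(2*(q2*θ2)))) *
          (mI w.2.2 ^ (-(q3*θ3)) * mI (w.2.1 + w.2.2) ^ (-(q3*θ3)))) :=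
      Summable.mul_of_nonneg
        (f := fun v : ℤ × ℤ => mI v.1 ^ (-(2*(q1*θ1))) * mI v.2 ^ (-(2*(q2*θ2))))
        (g := fun v : ℤ × ℤ => mI v.2 ^ (-(q3*θ3)) * mI (v.1 + v.2) ^ (-(q3*θ3)))
        hG12 hH
        (Pi.le_def.mpr fun v => mul_nonneg (Real.rpow_nonneg (le_of_lt (mI_pos _)) _)
          (Real.rpow_nonneg (le_of_lt (mI_pos _)) _))
        (Pi.le_def.mpr fun v => mul_nonneg (Real.rpow_nonneg (le_of_lt (mI_pos _)) _)
          (Real.rpow_nonneg (le_of_lt (mI_pos _)) _))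
    let E : (ℤ × (ℤ × ℤ × ℤ)) ≃ ((ℤ × ℤ) × (ℤ × ℤ)) :=
      ⟨fun w => ((w.2.1, w.2.2.1), (w.1, w.2.2.2)),
       fun v => (v.2.1, (v.1.1, (v.1.2, v.2.2))),
       fun w => rfl, fun v => rfl⟩
    set Ψ : ℤ × (ℤ × ℤ × ℤ) → ℝ := fun w => (C*C) *
      ((mI w.2.1 ^ (-(2*(q1*θ1))) * mI w.2.2.1 ^ (-(2*(q2*θ2)))) *
        (mI w.2.2.2 ^ (-(q3*θ3)) * mI (w.1 + w.2.2.2) ^ (-(q3*θ3)))) with hΨdef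
    have hΨsummable : Summable Ψ := by
      have h' := ((E.summable_iff (f := fun w : (ℤ × ℤ) × (ℤ × ℤ) =>
        (mI w.1.1 ^ (-(2*(q1*θ1))) * mI w.1.2 ^ (-(2*(q2*θ2)))) *
          (mI w.2.2 ^ (-(q3*θ3)) * mI (w.2.1 + w.2.2) ^ (-(q3*θ3))))).2 hbig).mul_left (C*C)
      exact h'.congr (fun w => rfl)
    have hΨnonneg : ∀ w, 0 ≤ Ψ w := by
      intro w
      rw [hΨdef]
      have := mI_pos w.2.1
      have p1 := Real.rpow_nonneg (le_of_lt (mI_pos w.2.1)) (-(2*(q1*θ1)))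
      have p2 := Real.rpow_nonneg (le_of_lt (mI_pos w.2.2.1)) (-(2*(q2*θ2)))
      have p3 := Real.rpow_nonneg (le_of_lt (mI_pos w.2.2.2)) (-(q3*θ3))
      have p4 := Real.rpow_nonneg (le_of_lt (mI_pos (w.1 + w.2.2.2))) (-(q3*θ3))
      positivity
    obtain ⟨hsec, htot⟩ := (summable_prod_of_nonneg hΨnonneg).1 hΨsummable
    have hpt : ∀ (t3 : ℤ) (s : ℤ × ℤ × ℤ),
        |a s * a (((0:ℤ), (0:ℤ), t3) + s)| ≤ Ψ (t3, s) := by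
      intro t3 s
      have hco : (((0:ℤ), (0:ℤ), t3) + s) = (s.1, s.2.1, t3 + s.2.2) := by
        cases s with
        | mk s1 s23 =>
          cases s23 with
          | mk s2 s3 => simp [Prod.ext_iff]
      rw [hco, abs_mul]
      have b1 := hCb s
      have b2 := hCb ((s.1, s.2.1, t3 + s.2.2) : ℤ × ℤ × ℤ)
      simp only at b2
      have hrhs1 : (0:ℝ) ≤ C * (mI s.1 ^ (-(q1*θ1)) *
          (mI s.2.1 ^ (-(q2*θ2)) * mI s.2.2 ^ (-(q3*θ3)))) := by
        have p1 := Real.rpow_nonneg (le_of_lt (mI_pos s.1)) (-(q1*θ1))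
        have p2 := Real.rpow_nonneg (le_of_lt (mI_pos s.2.1)) (-(q2*θ2))
        have p3 := Real.rpow_nonneg (le_of_lt (mI_pos s.2.2)) (-(q3*θ3))
        positivity
      have := mul_le_mul b1 b2 (abs_nonneg _) hrhs1
      refine le_trans this (le_of_eq ?_)
      rw [hΨdef]
      simp only
      rw [h2e s.1 (q1*θ1), h2e s.2.1 (q2*θ2)]
      ring
    refine Summable.of_nonneg_of_le (fun t3 => abs_nonneg _) (fun t3 => ?_) htot
    have hsa : Summable (fun s : ℤ × ℤ × ℤ => |a s * a (((0:ℤ), (0:ℤ), t3) + s)|) :=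
      Summable.of_nonneg_of_le (fun s => abs_nonneg _) (hpt t3) (hsec t3)
    calc |r (0, 0, t3)| = |∑' s : ℤ × ℤ × ℤ, a s * a (((0:ℤ), (0:ℤ), t3) + s)| := by rw [hr]
    _ ≤ ∑' s : ℤ × ℤ × ℤ, |a s * a (((0:ℤ), (0:ℤ), t3) + s)| := by
        have := norm_tsum_le_tsum_norm
          (f := fun s : ℤ × ℤ × ℤ => a s * a (((0:ℤ), (0:ℤ), t3) + s)) (by simpa only [Real.norm_eq_abs] using hsa)
        simpa only [Real.norm_eq_abs] using this
    _ ≤ ∑' s : ℤ × ℤ × ℤ, Ψ (t3, s) := Summable.tsum_le_tsum (hpt t3) hsa (hsec t3)
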